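/- arXiv:1806.00917 — 5 statements merged into one kernel-verified Lean document; each statement's English description precedes it below -/
import Mathlib

section
/- For every edge-state vector X : E → Bool, there exists a vertex assignment S : V → Bool such that (X, S) satisfies ψ if and only if X lies in the failure domain Ω_f, i.e., some pair of terminals of K is not X-connected. -/
/-- One step along an operational edge: `a` and `b` are the two endpoints of some
edge `e` with `X e = true`. -/
def edgeStep {V E : Type*} (uE vE : E → V) (X : E → Bool) (a b : V) : Prop :=
  ∃ e : E, X e = true ∧ ((uE e = a ∧ vE e = b) ∨ (uE e = b ∧ vE e = a))

/-- `a` and `b` are `X`-connected: reflexive-transitive closure of `edgeStep`. -/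
def xConnected {V E : Type*} (uE vE : E → V) (X : E → Bool) (a b : V) : Prop :=
  Relation.ReflTransGen (edgeStep uE vE X) a b

/-- The state `X` is safe (`Φ(X) = 1`): every pair of terminals is `X`-connected. -/
def safe {V E : Type*} (uE vE : E → V) (K : Finset V) (X : E → Bool) : Prop :=
  ∀ a ∈ K, ∀ b ∈ K, xConnected uE vE X a b

/-- `(X, S)` satisfies the formula `ψ`. -/
def satPsi {V E : Type*} (uE vE : E → V) (K : Finset V) (X : E → Bool) (S : V → Bool) : Prop :=
  (∃ j ∈ K, S j = true) ∧ (∃ k ∈ K, S k = false) ∧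
    ∀ e : E, ((S (uE e) = true ∧ X e = true) → S (vE e) = true) ∧
      ((S (vE e) = true ∧ X e = true) → S (uE e) = true)

lemma S_const_on_conn {V E : Type*} (uE vE : E → V) (X : E → Bool) (S : V → Bool)
    (hS : ∀ e : E, ((S (uE e) = true ∧ X e = true) → S (vE e) = true) ∧
      ((S (vE e) = true ∧ X e = true) → S (uE e) = true))
    {a b : V} (h : xConnected uE vE X a b) (ha : S a = true) : S b = true := by
  induction h with
  | refl => exact ha
  | tail _ hstep ih =>
    obtain ⟨e, hXe, hcase⟩ := hstep
    rcases hcase with ⟨h1, h2⟩ | ⟨h1, h2⟩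
    · subst h1 h2; exact (hS e).1 ⟨ih, hXe⟩
    · subst h1 h2; exact (hS e).2 ⟨ih, hXe⟩

/-- for every edge-state vector `X`, there is a vertex assignment `S`
with `(X, S)` satisfying `ψ` iff `X` lies in the failure domain, i.e. `X` is unsafe. -/
theorem stmt0 {V E : Type*} [Fintype V] [Fintype E] (uE vE : E → V) (K : Finset V)
    (hK : 2 ≤ K.card) (X : E → Bool) :
    (∃ S : V → Bool, satPsi uE vE K X S) ↔ ¬ safe uE vE K X := by
  classical
  constructor
  · rintro ⟨S, ⟨j, hj, hSj⟩, ⟨k, hk, hSk⟩, hS⟩ hsafe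
    have := S_const_on_conn uE vE X S hS (hsafe j hj k hk) hSj
    simp [this] at hSk
  · intro hsafe
    simp only [safe, not_forall] at hsafe
    obtain ⟨a, ha, b, hb, hnc⟩ := hsafe
    refine ⟨fun v => decide (xConnected uE vE X a v), ⟨a, ha, ?_⟩, ⟨b, hb, ?_⟩, ?_⟩
    · exact decide_eq_true (Relation.ReflTransGen.refl : xConnected uE vE X a a)
    · simp [hnc]
    · intro e
      constructor <;> rintro ⟨h1, h2⟩ <;> simp only [decide_eq_true_eq] at h1 ⊢
      · exact h1.tail ⟨e, h2, Or.inl ⟨rfl, rfl⟩⟩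
      · exact h1.tail ⟨e, h2, Or.inr ⟨rfl, rfl⟩⟩
end

section
/- The number of edge-state vectors X : E → Bool for which there exists S : V → Bool with (X, S) satisfying ψ equals the number of edge-state vectors in the failure domain, i.e., #F_K = |Ω_f|. -/
theorem key {V E : Type*} (uE vE : E → V) (K : Finset V) (X : E → Bool) :
    (∃ S : V → Bool, satPsi uE vE K X S) ↔ ¬ safe uE vE K X := by
  constructor
  · rintro ⟨S, ⟨j, hj, hjT⟩, ⟨k, hk, hkF⟩, hE⟩ hsafe
    have hstep : ∀ a b, edgeStep uE vE X a b → S a = true → S b = true := by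
      rintro a b ⟨e, he, h | h⟩ ha
      · exact h.2 ▸ (hE e).1 ⟨h.1 ▸ ha, he⟩
      · exact h.1 ▸ (hE e).2 ⟨h.2 ▸ ha, he⟩
    have := hsafe j hj k hk
    have hk' : S k = true := by
      clear hk hkF
      induction this with
      | refl => exact hjT
      | tail _ h ih => exact hstep _ _ h ih
    simp [hk'] at hkF
  · intro hns
    simp only [safe, not_forall] at hns
    obtain ⟨a, ha, b, hb, hab⟩ := hns
    classical
    refine ⟨fun v => decide (xConnected uE vE X a v), ⟨a, ha, by simp only [decide_eq_true_eq]; exact Relation.ReflTransGen.refl⟩,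
      ⟨b, hb, by simp [hab]⟩, fun e => ?_⟩
    constructor
    · rintro ⟨h1, h2⟩
      simp only [decide_eq_true_eq] at h1 ⊢
      exact h1.tail ⟨e, h2, Or.inl ⟨rfl, rfl⟩⟩
    · rintro ⟨h1, h2⟩
      simp only [decide_eq_true_eq] at h1 ⊢
      exact h1.tail ⟨e, h2, Or.inr ⟨rfl, rfl⟩⟩

/-- the projected model count `#F_K` of `ψ` equals the size of the
failure domain `Ω_f`. -/
theorem stmt1 {V E : Type*} [Fintype V] [Fintype E] (uE vE : E → V) (K : Finset V)
    (hK : 2 ≤ K.card) :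
    Nat.card {X : E → Bool // ∃ S : V → Bool, satPsi uE vE K X S}
      = Nat.card {X : E → Bool // ¬ safe uE vE K X} := by
  exact Nat.card_congr (Equiv.subtypeEquivRight fun X => key uE vE K X)
end

section
/- For the gadget graph G_q built from the binary expansion q = Σ_{k=1}^{m} b_k 2^{−k}: the number of edge-state vectors X : {1,…,m} → Bool for which v_0 and v_{z_m+1} are X-connected equals q · 2^m = Σ_{k=1}^{m} b_k 2^{m−k} (equivalently, when each edge works with probability 1/2 independently, the two-terminal reliability of G_q equals q); moreover |V| + |E| = z_m + 2 + m. -/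
/-- `z_k`: the number of zeros among the first `k` bits `b_1, …, b_k`
(so `zfun b 0 = 0`). -/
def zfun (b : ℕ → Bool) (k : ℕ) : ℕ :=
  k - ∑ i ∈ Finset.Icc 1 k, (if b i then 1 else 0)


lemma zsum_le (b : ℕ → Bool) (k : ℕ) : (∑ i ∈ Finset.Icc 1 k, (if b i then 1 else 0)) ≤ k := by
  calc (∑ i ∈ Finset.Icc 1 k, (if b i then 1 else 0)) ≤ ∑ i ∈ Finset.Icc 1 k, 1 :=
        Finset.sum_le_sum (fun i _ => by split <;> omega)
    _ = k := by simp [Nat.card_Icc]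

lemma zfun_zero (b : ℕ → Bool) : zfun b 0 = 0 := by simp [zfun]

lemma zfun_succ (b : ℕ → Bool) (k : ℕ) :
    zfun b (k+1) = zfun b k + (if b (k+1) then 0 else 1) := by
  have h1 := zsum_le b k
  have h2 : (∑ i ∈ Finset.Icc 1 (k+1), (if b i then (1:ℕ) else 0)) =
      (∑ i ∈ Finset.Icc 1 k, (if b i then 1 else 0)) + (if b (k+1) then 1 else 0) :=
    Finset.sum_Icc_succ_top (by omega) _
  unfold zfun
  rw [h2]
  split_ifs <;> omega

lemma zfun_mono (b : ℕ → Bool) : Monotone (zfun b) := by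
  apply monotone_nat_of_le_succ
  intro n
  rw [zfun_succ]
  omega

/-- Everything reachable from `a` stays in a set closed under steps. -/
lemma cut_lemma {α : Type*} (r : α → α → Prop) (A : α → Prop)
    (hcl : ∀ a v, A a → r a v → A v) :
    ∀ {a v}, Relation.ReflTransGen r a v → A a → A v := by
  intro a v h
  induction h with
  | refl => exact id
  | tail _ step ih => intro ha; exact hcl _ _ (ih ha) step

/-- The connectivity predicate in combinatorial form. -/
def Pred (m : ℕ) (b : ℕ → Bool) (X : Fin m → Bool) : Prop :=
  ∃ e : Fin m, b (e.val+1) = true ∧ X e = true ∧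
    ∀ f : Fin m, f.val < e.val → b (f.val+1) = false → X f = true

lemma reach_z (m : ℕ) (b : ℕ → Bool) (X : Fin m → Bool) :
    ∀ t, t ≤ m → (∀ f : Fin m, f.val < t → b (f.val+1) = false → X f = true) →
    xConnected (fun e : Fin m => zfun b e.val)
      (fun e : Fin m => if b (e.val + 1) then zfun b m + 1 else zfun b (e.val + 1))
      X 0 (zfun b t) := by
  intro t
  induction t with
  | zero => intro _ _; rw [zfun_zero]; exact Relation.ReflTransGen.refl
  | succ n ih =>
    intro ht h
    have hreach := ih (by omega) (fun f hf => h f (by omega))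
    rcases hb : b (n+1)
    · refine hreach.tail ?_
      refine ⟨⟨n, by omega⟩, h ⟨n, by omega⟩ (by simp) hb, Or.inl ⟨rfl, ?_⟩⟩
      simp [hb]
    · have hz : zfun b (n+1) = zfun b n := by rw [zfun_succ, hb]; simp
      rw [hz]; exact hreach

lemma conn_iff (m : ℕ) (b : ℕ → Bool) (X : Fin m → Bool) :
    xConnected (fun e : Fin m => zfun b e.val)
      (fun e : Fin m => if b (e.val + 1) then zfun b m + 1 else zfun b (e.val + 1))
      X 0 (zfun b m + 1) ↔ Pred m b X := by
  constructor
  · intro h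
    by_contra hP
    by_cases hA : ∃ n : ℕ, ∃ hn : n < m, b (n+1) = false ∧ X ⟨n, hn⟩ = false
    · -- broken zero edge exists; take minimal
      classical
      obtain ⟨htm, hbt, hXt⟩ := Nat.find_spec hA
      set t := Nat.find hA with htdef
      have hmin : ∀ n, n < t → ∀ hn : n < m, b (n+1) = false → X ⟨n, hn⟩ = true := by
        intro n hn hnm hbn
        cases hXn : X ⟨n, hnm⟩
        · exact absurd ⟨hnm, hbn, hXn⟩ (Nat.find_min hA hn)
        · rfl
      have hz1 : zfun b (t+1) = zfun b t + 1 := by rw [zfun_succ, hbt]; simp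
      have hzm : zfun b t ≤ zfun b m := zfun_mono b (le_of_lt htm)
      have hAv := cut_lemma _ (fun v => v ≤ zfun b t) ?_ h (by omega)
      · omega
      rintro a v ha ⟨e, hXe, hends⟩
      simp only at ha hends ⊢
      have hboth : (zfun b e.val ≤ zfun b t ∧
            (if b (e.val + 1) then zfun b m + 1 else zfun b (e.val + 1)) ≤ zfun b t) ∨
          (zfun b t + 1 ≤ zfun b e.val ∧
            zfun b t + 1 ≤ (if b (e.val + 1) then zfun b m + 1 else zfun b (e.val + 1))) := by
        rcases hbe : b (e.val + 1)
        · -- zero edge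
          simp only [hbe, Bool.false_eq_true, if_false]
          rcases lt_trichotomy e.val t with hc | hc | hc
          · exact Or.inl ⟨zfun_mono b (by omega), zfun_mono b (by omega)⟩
          · exfalso
            have he : e = ⟨t, htm⟩ := Fin.ext hc
            rw [he, hXt] at hXe
            exact absurd hXe (by simp)
          · refine Or.inr ⟨?_, ?_⟩
            · rw [← hz1]; exact zfun_mono b (by omega)
            · rw [← hz1]; exact zfun_mono b (by omega)
        · -- one edge: Pred fails, so there is an earlier broken zero edge
          simp only [hbe, if_true]
          have hne : ¬ (b (e.val+1) = true ∧ X e = true ∧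
              ∀ f : Fin m, f.val < e.val → b (f.val+1) = false → X f = true) :=
            fun hc => hP ⟨e, hc⟩
          push_neg at hne
          obtain ⟨f, hf1, hf2, hf3⟩ := hne hbe hXe
          have hXf : X f = false := by
            cases hXf : X f
            · rfl
            · exact absurd hXf hf3
          have htf : t ≤ f.val := by
            by_contra hc
            have := hmin f.val (by omega) f.isLt hf2
            rw [Fin.eta] at this
            rw [this] at hXf
            exact absurd hXf (by simp)
          refine Or.inr ⟨?_, by omega⟩
          rw [← hz1]; exact zfun_mono b (by omega)
      rcases hends with ⟨h3, h4⟩ | ⟨h3, h4⟩ <;> rcases hboth with ⟨h5, h6⟩ | ⟨h5, h6⟩ <;> omega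
    · -- no broken zero edge: all one-edges must be down
      have hzero : ∀ f : Fin m, b (f.val+1) = false → X f = true := by
        intro f hf
        cases hXf : X f
        · exact absurd ⟨f.val, f.isLt, hf, by rw [Fin.eta]; exact hXf⟩ hA
        · rfl
      have hone : ∀ e : Fin m, b (e.val+1) = true → X e = false := by
        intro e hbe
        cases hXe : X e
        · rfl
        · exact absurd (⟨e, hbe, hXe, fun f _ hbf => hzero f hbf⟩ : Pred m b X) hP
      have hAv := cut_lemma _ (fun v => v ≤ zfun b m) ?_ h (by omega)
      · omega
      rintro a v ha ⟨e, hXe, hends⟩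
      simp only at ha hends ⊢
      rcases hbe : b (e.val + 1)
      · have h1 : zfun b e.val ≤ zfun b m := zfun_mono b (by omega)
        have h2 : zfun b (e.val+1) ≤ zfun b m := zfun_mono b e.isLt
        simp only [hbe, Bool.false_eq_true, if_false] at hends
        rcases hends with ⟨h3, h4⟩ | ⟨h3, h4⟩ <;> omega
      · rw [hone e hbe] at hXe; exact absurd hXe (by simp)
  · rintro ⟨e, hbe, hXe, hall⟩
    have h1 := reach_z m b X e.val (by omega) hall
    refine h1.tail ⟨e, hXe, Or.inl ⟨rfl, ?_⟩⟩
    simp [hbe]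

def Sdef (m : ℕ) (b : ℕ → Bool) (e : Fin m) (X : Fin m → Bool) : Prop :=
  ∀ f : Fin m, f.val < e.val + 1 → X f = (if f.val = e.val then true else !b (f.val+1))

def restEquiv (m t : ℕ) (ht : t ≤ m) (c : Fin m → Bool) :
    {X : Fin m → Bool // ∀ f : Fin m, f.val < t → X f = c f} ≃ (Fin (m - t) → Bool) where
  toFun X i := X.1 ⟨t + i.val, by omega⟩
  invFun Y := ⟨fun f => if h : f.val < t then c f else Y ⟨f.val - t, by omega⟩,
    fun f hf => by simp [hf]⟩
  left_inv := by
    rintro ⟨X, hX⟩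
    apply Subtype.ext
    funext f
    by_cases h : f.val < t
    · simp only [dif_pos h]
      exact (hX f h).symm
    · simp only [dif_neg h]
      congr 1
      apply Fin.ext
      simp
      omega
  right_inv := by
    intro Y
    funext i
    simp only
    rw [dif_neg (by omega)]
    congr 1
    apply Fin.ext
    simp

lemma card_fixed (m t : ℕ) (ht : t ≤ m) (c : Fin m → Bool)
    [DecidablePred (fun X : Fin m → Bool => ∀ f : Fin m, f.val < t → X f = c f)] :
    (Finset.univ.filter (fun X : Fin m → Bool => ∀ f : Fin m, f.val < t → X f = c f)).card
      = 2 ^ (m - t) := by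
  rw [← Fintype.card_subtype]
  rw [Fintype.card_congr (restEquiv m t ht c)]
  simp [Fintype.card_fun]

lemma pred_iff (m : ℕ) (b : ℕ → Bool) (X : Fin m → Bool) :
    Pred m b X ↔ ∃ e : Fin m, b (e.val+1) = true ∧ Sdef m b e X := by
  constructor
  · rintro ⟨e0, hb0, hX0, hall⟩
    classical
    have hex : ∃ n : ℕ, ∃ hn : n < m, X ⟨n, hn⟩ = b (n+1) := ⟨e0.val, e0.isLt, by rw [Fin.eta, hX0, hb0]⟩
    obtain ⟨htm, hXt⟩ := Nat.find_spec hex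
    set t := Nat.find hex with htdef
    have hmin : ∀ f : Fin m, f.val < t → X f = !b (f.val+1) := by
      intro f hf
      have h1 : ¬ ∃ hn : f.val < m, X ⟨f.val, hn⟩ = b (f.val+1) := Nat.find_min hex hf
      push_neg at h1
      have := h1 f.isLt
      rw [Fin.eta] at this
      cases hb : b (f.val+1) <;> cases hX : X f <;> simp_all
    have hte : t ≤ e0.val := by
      by_contra hc
      have := hmin e0 (by omega)
      rw [hX0, hb0] at this
      exact absurd this (by simp)
    have hbt : b (t+1) = true := by
      rcases Nat.lt_or_ge t e0.val with hc | hc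
      · cases hb : b (t+1)
        · have := hall ⟨t, htm⟩ hc hb
          rw [this, hb] at hXt
          exact absurd hXt (by simp)
        · rfl
      · have : t = e0.val := by omega
        rw [this]; exact hb0
    refine ⟨⟨t, htm⟩, hbt, ?_⟩
    intro f hf
    simp only [Fin.val_mk] at hf ⊢
    rcases Nat.lt_or_ge f.val t with hc | hc
    · rw [if_neg (by omega), hmin f hc]
    · have hft : f.val = t := by simpa using Nat.le_antisymm (by omega) hc
      rw [if_pos hft]
      have hfe : f = ⟨t, htm⟩ := Fin.ext hft
      rw [hfe, hXt, hbt]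
  · rintro ⟨e, hbe, hS⟩
    refine ⟨e, hbe, ?_, ?_⟩
    · have := hS e (by omega)
      rwa [if_pos rfl] at this
    · intro f hf hbf
      have := hS f (by omega)
      rw [if_neg (by omega), hbf] at this
      simpa using this

lemma count_pred (m : ℕ) (b : ℕ → Bool) :
    Nat.card {X : Fin m → Bool // Pred m b X}
      = ∑ k ∈ Finset.Icc 1 m, (if b k then 2 ^ (m - k) else 0) := by
  classical
  rw [Nat.card_eq_fintype_card, Fintype.card_subtype]
  have hun : Finset.univ.filter (Pred m b)
      = (Finset.univ.filter (fun e : Fin m => b (e.val+1) = true)).biUnion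
          (fun e => Finset.univ.filter (Sdef m b e)) := by
    ext X
    simp only [Finset.mem_filter, Finset.mem_biUnion, Finset.mem_univ, true_and]
    rw [pred_iff]
  rw [hun, Finset.card_biUnion]
  · have hcard : ∀ e ∈ Finset.univ.filter (fun e : Fin m => b (e.val+1) = true),
        (Finset.univ.filter (Sdef m b e)).card = 2 ^ (m - (e.val + 1)) := by
      intro e _
      rw [← Fintype.card_subtype, ← Nat.card_eq_fintype_card]
      have h3 : Nat.card (Fin (m - (e.val+1)) → Bool) = 2 ^ (m - (e.val + 1)) := by
        rw [Nat.card_eq_fintype_card]; simp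
      exact (Nat.card_congr (restEquiv m (e.val+1) (by omega)
        (fun f : Fin m => if f.val = e.val then true else !b (f.val+1)))).trans h3
    rw [Finset.sum_congr rfl hcard]
    rw [Finset.sum_filter]
    rw [Fin.sum_univ_eq_sum_range (fun n => if b (n+1) = true then 2 ^ (m - (n+1)) else 0) m]
    rw [← Finset.Ico_add_one_right_eq_Icc, Finset.sum_Ico_eq_sum_range]
    simp only [Nat.add_sub_cancel, Nat.succ_sub_one]
    apply Finset.sum_congr rfl
    intro i _
    rw [Nat.add_comm 1 i]
  · intro e he e' he' hne
    apply Finset.disjoint_left.2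
    intro X hX hX'
    simp only [Finset.mem_filter, Finset.mem_univ, true_and, Finset.coe_filter, Set.mem_setOf_eq] at hX hX' he he'
    rcases lt_trichotomy e.val e'.val with hc | hc | hc
    · have h1 := hX e (by omega)
      rw [if_pos rfl] at h1
      have h2 := hX' e (by omega)
      rw [if_neg (by omega), he] at h2
      rw [h1] at h2
      exact absurd h2 (by simp)
    · exact hne (Fin.ext hc)
    · have h1 := hX' e' (by omega)
      rw [if_pos rfl] at h1
      have h2 := hX e' (by omega)
      rw [if_neg (by omega), he'] at h2
      rw [h1] at h2
      exact absurd h2 (by simp)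

/-- for the gadget graph `G_q` built from the binary expansion
`q = Σ_{k=1}^m b_k 2^{-k}` (vertices `v_0, …, v_{z_m+1}` identified with the naturals
`0, …, z_m + 1`; edge `k ∈ {1, …, m}` has endpoints `(v_{z_{k-1}}, v_{z_k})` if
`b_k = 0` and `(v_{z_{k-1}}, v_{z_m+1})` if `b_k = 1`), the number of edge-state
vectors `X` for which `v_0` and `v_{z_m+1}` are `X`-connected equals
`q · 2^m = Σ_{k=1}^m b_k 2^{m-k}`; moreover `|V| + |E| = z_m + 2 + m`. -/
theorem stmt3 (m : ℕ) (hm : 0 < m) (b : ℕ → Bool) (q : ℝ)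
    (hq : q = ∑ k ∈ Finset.Icc 1 m, (if b k then ((1 : ℝ)/2) ^ k else 0))
    (hq0 : 0 < q) (hq1 : q < 1) :
    (Nat.card {X : Fin m → Bool //
        xConnected (fun e : Fin m => zfun b e.val)
          (fun e : Fin m => if b (e.val + 1) then zfun b m + 1 else zfun b (e.val + 1))
          X 0 (zfun b m + 1)} : ℝ) = q * 2 ^ m ∧
    Nat.card {X : Fin m → Bool //
        xConnected (fun e : Fin m => zfun b e.val)
          (fun e : Fin m => if b (e.val + 1) then zfun b m + 1 else zfun b (e.val + 1))
          X 0 (zfun b m + 1)}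
      = ∑ k ∈ Finset.Icc 1 m, (if b k then 2 ^ (m - k) else 0) ∧
    (Finset.range (zfun b m + 2)).card + Fintype.card (Fin m) = zfun b m + 2 + m := by
  have hcount : Nat.card {X : Fin m → Bool //
      xConnected (fun e : Fin m => zfun b e.val)
        (fun e : Fin m => if b (e.val + 1) then zfun b m + 1 else zfun b (e.val + 1))
        X 0 (zfun b m + 1)}
      = ∑ k ∈ Finset.Icc 1 m, (if b k then 2 ^ (m - k) else 0) := by
    rw [Nat.card_congr (Equiv.subtypeEquivRight (fun X => conn_iff m b X))]
    exact count_pred m b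
  refine ⟨?_, hcount, by simp⟩
  rw [hcount, hq, Finset.sum_mul]
  push_cast
  apply Finset.sum_congr rfl
  intro k hk
  simp only [Finset.mem_Icc] at hk
  split_ifs with hb
  · have h2 : (2:ℝ)^(m-k) * 2^k = 2^m := by rw [← pow_add]; congr 1; omega
    have hk0 : (2:ℝ)^k ≠ 0 := by positivity
    rw [← h2, one_div_pow]
    field_simp
  · simp
end

section
/- Replacing every edge of G by its reliability-preserving gadget leaves the K-terminal unreliability unchanged with all edge failure probabilities set to 1/2: u_G(P) = u_{G′}(P_{1/2}) = |Ω_f(G′)| / 2^M, where M = |E′| = Σ_{e∈E} m_e. -/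
open scoped Classical in
/-- The `K`-terminal unreliability of the graph with edge failure probabilities `p`:
`u_G(P) = Σ_X (1 − Φ(X)) · ∏_e p_e^(1−[X e]) (1 − p_e)^[X e]`. -/
noncomputable def unrel {V E : Type*} [Fintype E] [DecidableEq E]
    (uE vE : E → V) (K : Finset V) (p : E → ℝ) : ℝ :=
  ∑ X : E → Bool, (if safe uE vE K X then (0 : ℝ) else 1) *
    ∏ e : E, p e ^ (if X e then 0 else 1) * (1 - p e) ^ (if X e then 1 else 0)

/-- `z^e_k`: the number of zeros among the first `k` bits `b^e_1, …, b^e_k` of the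
binary expansion attached to edge `e` (so `gz be e 0 = 0`). -/
def gz {E : Type*} (be : E → ℕ → Bool) (e : E) (k : ℕ) : ℕ :=
  k - ∑ i ∈ Finset.Icc 1 k, (if be e i then 1 else 0)

/-- Vertices of the transformed graph `G′`: the original vertices together with the
fresh interior gadget vertices `v_1, …, v_{z_{m_e}}` (distinct across gadgets). -/
abbrev Vtrans (V E : Type*) (be : E → ℕ → Bool) (me : E → ℕ) : Type _ :=
  V ⊕ (Σ e : E, Fin (gz be e (me e)))

/-- The gadget vertex `v_j` of the gadget replacing edge `e`, as a vertex of `G′`: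
`v_0` is identified with the endpoint `uE e`, `v_{z_{m_e}+1}` with the endpoint
`vE e`, and `v_1, …, v_{z_{m_e}}` are fresh interior vertices. -/
def gadgetVertex {V E : Type*} (uE vE : E → V) (be : E → ℕ → Bool) (me : E → ℕ)
    (e : E) (j : ℕ) : Vtrans V E be me :=
  if j = 0 then Sum.inl (uE e)
  else if j = gz be e (me e) + 1 then Sum.inl (vE e)
  else if h : j - 1 < gz be e (me e) then Sum.inr ⟨e, ⟨j - 1, h⟩⟩
  else Sum.inl (uE e)

/-- First endpoint of edge `(e, k)` of `G′` (the edge for bit `k+1` of the gadget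
replacing `e`): the gadget vertex `v_{z_k}`. -/
def uTrans {V E : Type*} (uE vE : E → V) (be : E → ℕ → Bool) (me : E → ℕ) :
    (Σ e : E, Fin (me e)) → Vtrans V E be me :=
  fun ek => gadgetVertex uE vE be me ek.1 (gz be ek.1 ek.2.val)

/-- Second endpoint of edge `(e, k)` of `G′`: the gadget vertex `v_{z_m+1}` if bit
`k+1` is one, and `v_{z_{k+1}}` otherwise. -/
def vTrans {V E : Type*} (uE vE : E → V) (be : E → ℕ → Bool) (me : E → ℕ) :
    (Σ e : E, Fin (me e)) → Vtrans V E be me :=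
  fun ek =>
    if be ek.1 (ek.2.val + 1) then gadgetVertex uE vE be me ek.1 (gz be ek.1 (me ek.1) + 1)
    else gadgetVertex uE vE be me ek.1 (gz be ek.1 (ek.2.val + 1))

/- ## gz lemmas -/

lemma stmt4aux_ones_le {E : Type*} (be : E → ℕ → Bool) (e : E) (k : ℕ) :
    (∑ i ∈ Finset.Icc 1 k, (if be e i then 1 else 0)) ≤ k := by
  calc (∑ i ∈ Finset.Icc 1 k, (if be e i then 1 else 0))
      ≤ ∑ i ∈ Finset.Icc 1 k, 1 := Finset.sum_le_sum (by intro i _; split <;> omega)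
    _ = k := by simp [Nat.card_Icc]

lemma stmt4aux_gz_zero {E : Type*} (be : E → ℕ → Bool) (e : E) : gz be e 0 = 0 := by
  simp [gz]

lemma stmt4aux_gz_succ {E : Type*} (be : E → ℕ → Bool) (e : E) (k : ℕ) :
    gz be e (k + 1) = gz be e k + (if be e (k+1) then 0 else 1) := by
  have h1 : (∑ i ∈ Finset.Icc 1 (k+1), (if be e i then 1 else 0))
      = (∑ i ∈ Finset.Icc 1 k, (if be e i then 1 else 0)) + (if be e (k+1) then 1 else 0) :=
    Finset.sum_Icc_succ_top (by omega) _
  have h2 := stmt4aux_ones_le be e k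
  unfold gz
  rw [h1]
  split <;> omega

lemma stmt4aux_gz_mono {E : Type*} (be : E → ℕ → Bool) (e : E) : Monotone (gz be e) := by
  apply monotone_nat_of_le_succ
  intro k
  rw [stmt4aux_gz_succ]
  omega

lemma stmt4aux_gz_succ_true {E : Type*} {be : E → ℕ → Bool} {e : E} {k : ℕ}
    (h : be e (k+1) = true) : gz be e (k + 1) = gz be e k := by
  rw [stmt4aux_gz_succ]; simp [h]

lemma stmt4aux_gz_succ_false {E : Type*} {be : E → ℕ → Bool} {e : E} {k : ℕ}
    (h : be e (k+1) = false) : gz be e (k + 1) = gz be e k + 1 := by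
  rw [stmt4aux_gz_succ]; simp [h]

/- ## gadgetVertex lemmas -/

section GV
variable {V E : Type*} (uE vE : E → V) (be : E → ℕ → Bool) (me : E → ℕ)

lemma stmt4aux_gv_zero (e : E) : gadgetVertex uE vE be me e 0 = Sum.inl (uE e) := by
  simp [gadgetVertex]

lemma stmt4aux_gv_top (e : E) :
    gadgetVertex uE vE be me e (gz be e (me e) + 1) = Sum.inl (vE e) := by
  simp [gadgetVertex]

lemma stmt4aux_gv_mid (e : E) (j : ℕ) (h0 : 1 ≤ j) (h1 : j ≤ gz be e (me e)) :
    gadgetVertex uE vE be me e j = Sum.inr ⟨e, ⟨j - 1, by omega⟩⟩ := by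
  unfold gadgetVertex
  rw [if_neg (by omega), if_neg (by omega), dif_pos (by omega)]

/-- Every gadget vertex with index in range is `inl (uE e)`, `inl (vE e)`, or interior of `e`. -/
lemma stmt4aux_gv_cases (e : E) (j : ℕ) :
    gadgetVertex uE vE be me e j = Sum.inl (uE e) ∨
    gadgetVertex uE vE be me e j = Sum.inl (vE e) ∨
    ∃ i : Fin (gz be e (me e)), gadgetVertex uE vE be me e j = Sum.inr ⟨e, i⟩ := by
  unfold gadgetVertex
  split
  · exact Or.inl rfl
  split
  · exact Or.inr (Or.inl rfl)
  split
  · exact Or.inr (Or.inr ⟨_, rfl⟩)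
  · exact Or.inl rfl

/-- Injectivity of `gadgetVertex e` on `[0, gz+1]` when the two endpoints differ. -/
lemma stmt4aux_gv_inj (e : E) (huv : uE e ≠ vE e) {j j' : ℕ}
    (hj : j ≤ gz be e (me e) + 1) (hj' : j' ≤ gz be e (me e) + 1)
    (h : gadgetVertex uE vE be me e j = gadgetVertex uE vE be me e j') : j = j' := by
  rcases Nat.eq_zero_or_pos j with h0 | h0 <;> rcases Nat.eq_zero_or_pos j' with h0' | h0'
  · omega
  · subst h0
    rw [stmt4aux_gv_zero] at h
    rcases Nat.lt_or_ge j' (gz be e (me e) + 1) with hlt | hge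
    · rw [stmt4aux_gv_mid uE vE be me e j' (by omega) (by omega)] at h; exact absurd h (by simp)
    · have : j' = gz be e (me e) + 1 := by omega
      rw [this, stmt4aux_gv_top] at h
      exact absurd (Sum.inl.inj h) huv
  · subst h0'
    rw [stmt4aux_gv_zero] at h
    rcases Nat.lt_or_ge j (gz be e (me e) + 1) with hlt | hge
    · rw [stmt4aux_gv_mid uE vE be me e j (by omega) (by omega)] at h; exact absurd h (by simp)
    · have : j = gz be e (me e) + 1 := by omega
      rw [this, stmt4aux_gv_top] at h
      exact absurd (Sum.inl.inj h).symm huv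
  · rcases Nat.lt_or_ge j (gz be e (me e) + 1) with hlt | hge <;>
      rcases Nat.lt_or_ge j' (gz be e (me e) + 1) with hlt' | hge'
    · rw [stmt4aux_gv_mid uE vE be me e j (by omega) (by omega),
        stmt4aux_gv_mid uE vE be me e j' (by omega) (by omega)] at h
      have := Sum.inr.inj h
      have : (⟨j-1, by omega⟩ : Fin (gz be e (me e))) = ⟨j'-1, by omega⟩ := by
        simpa using this
      have := Fin.mk.inj_iff.mp this
      omega
    · have : j' = gz be e (me e) + 1 := by omega
      rw [this, stmt4aux_gv_top, stmt4aux_gv_mid uE vE be me e j (by omega) (by omega)] at h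
      exact absurd h (by simp)
    · have : j = gz be e (me e) + 1 := by omega
      rw [this, stmt4aux_gv_top, stmt4aux_gv_mid uE vE be me e j' (by omega) (by omega)] at h
      exact absurd h (by simp)
    · omega

end GV

/- ## Gadget condition -/

/-- Edge states of gadget `e`, as a function on `ℕ`. -/
def XeN {E : Type*} (me : E → ℕ) (X' : (Σ e : E, Fin (me e)) → Bool) (e : E) : ℕ → Bool :=
  fun k => if h : k < me e then X' ⟨e, ⟨k, h⟩⟩ else false

/-- The combinatorial condition for the gadget to connect its two terminals. -/
def gadCond (m : ℕ) (b x : ℕ → Bool) : Prop :=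
  ∃ k, k < m ∧ b (k+1) = true ∧ x k = true ∧ ∀ j < k, b (j+1) = false → x j = true

section Gadget
variable {V E : Type*} [DecidableEq E] (uE vE : E → V) (be : E → ℕ → Bool) (me : E → ℕ)
  (X' : (Σ e : E, Fin (me e)) → Bool)

lemma stmt4aux_reach (e : E) (k0 : ℕ) (hk0 : k0 ≤ me e)
    (hzeros : ∀ j, j < k0 → be e (j+1) = false → XeN me X' e j = true) :
    ∀ k, k ≤ k0 → xConnected (uTrans uE vE be me) (vTrans uE vE be me) X'
      (Sum.inl (uE e)) (gadgetVertex uE vE be me e (gz be e k)) := by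
  intro k
  induction k with
  | zero =>
    intro _
    rw [stmt4aux_gz_zero, stmt4aux_gv_zero]
    exact Relation.ReflTransGen.refl
  | succ k ih =>
    intro hk
    have ihh := ih (by omega)
    cases hb : be e (k+1) with
    | true => rwa [stmt4aux_gz_succ_true hb]
    | false =>
      have hx : X' ⟨e, ⟨k, by omega⟩⟩ = true := by
        have := hzeros k (by omega) hb
        unfold XeN at this
        rwa [dif_pos (by omega)] at this
      refine Relation.ReflTransGen.tail ihh ?_
      refine ⟨⟨e, ⟨k, by omega⟩⟩, hx, Or.inl ⟨rfl, ?_⟩⟩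
      show vTrans uE vE be me ⟨e, ⟨k, by omega⟩⟩ = _
      unfold vTrans
      simp only [hb]
      rfl

lemma stmt4aux_gadPath (e : E) (hg : gadCond (me e) (be e) (XeN me X' e)) :
    xConnected (uTrans uE vE be me) (vTrans uE vE be me) X'
      (Sum.inl (uE e)) (Sum.inl (vE e)) := by
  obtain ⟨k0, hk0, hb, hx, hzeros⟩ := hg
  have hreach := stmt4aux_reach uE vE be me X' e k0 (le_of_lt hk0) hzeros k0 le_rfl
  have hx' : X' ⟨e, ⟨k0, hk0⟩⟩ = true := by
    unfold XeN at hx; rwa [dif_pos hk0] at hx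
  refine Relation.ReflTransGen.tail hreach ?_
  refine ⟨⟨e, ⟨k0, hk0⟩⟩, hx', Or.inl ⟨rfl, ?_⟩⟩
  show vTrans uE vE be me ⟨e, ⟨k0, hk0⟩⟩ = _
  unfold vTrans
  simp only [hb, if_true]
  exact stmt4aux_gv_top uE vE be me e

/-- Closed-set invariance for reflexive-transitive closure. -/
lemma stmt4aux_invar {α : Type*} {r : α → α → Prop} {S : α → Prop}
    (hcl : ∀ w w', r w w' → (S w ↔ S w')) {a b : α}
    (h : Relation.ReflTransGen r a b) (ha : S a) : S b := by
  induction h with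
  | refl => exact ha
  | tail _ hstep ih => exact (hcl _ _ hstep).mp ih

/-- The hard direction: if the gadget (using only its own edges) connects its two
distinct terminals, the combinatorial condition holds. -/
lemma stmt4aux_gadBlock (e : E) (huv : uE e ≠ vE e)
    (hcon : xConnected (uTrans uE vE be me) (vTrans uE vE be me)
      (fun ek => X' ek && decide (ek.1 = e)) (Sum.inl (uE e)) (Sum.inl (vE e))) :
    gadCond (me e) (be e) (XeN me X' e) := by
  by_contra hn
  classical
  have hnall : ∀ k, k < me e → be e (k+1) = true → XeN me X' e k = true →
      ∃ j, j < k ∧ be e (j+1) = false ∧ XeN me X' e j = false := by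
    intro k hk hbk hxk
    by_contra hno
    push_neg at hno
    exact hn ⟨k, hk, hbk, hxk, fun j hj hbj => by
      have := hno j hj hbj
      cases hxx : XeN me X' e j
      · exact absurd hxx this
      · rfl⟩
  set K0 : ℕ := if h : ∃ k, k < me e ∧ be e (k+1) = false ∧ XeN me X' e k = false
    then Nat.find h else me e with hK0def
  have hF1 : K0 ≤ me e := by
    rw [hK0def]
    split
    · next h => exact le_of_lt (Nat.find_spec h).1
    · exact le_rfl
  have hF5 : K0 < me e → be e (K0+1) = false ∧ XeN me X' e K0 = false := by
    intro hlt
    by_cases h : ∃ k, k < me e ∧ be e (k+1) = false ∧ XeN me X' e k = false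
    · have hfind : K0 = Nat.find h := by rw [hK0def, dif_pos h]
      rw [hfind]
      exact ⟨(Nat.find_spec h).2.1, (Nat.find_spec h).2.2⟩
    · rw [hK0def, dif_neg h] at hlt
      omega
  have hF6 : ∀ j, j < me e → be e (j+1) = false → XeN me X' e j = false → K0 ≤ j := by
    intro j hj hbj hxj
    have hex : ∃ k, k < me e ∧ be e (k+1) = false ∧ XeN me X' e k = false := ⟨j, hj, hbj, hxj⟩
    rw [hK0def, dif_pos hex]
    exact Nat.find_min' hex ⟨hj, hbj, hxj⟩
  have hBle : gz be e K0 ≤ gz be e (me e) := stmt4aux_gz_mono be e hF1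
  set S : Vtrans V E be me → Prop :=
    fun w => ∃ j, j ≤ gz be e K0 ∧ w = gadgetVertex uE vE be me e j with hSdef
  have hmem : ∀ i, i ≤ gz be e (me e) →
      (S (gadgetVertex uE vE be me e i) ↔ i ≤ gz be e K0) := by
    intro i hi
    constructor
    · rintro ⟨j, hj, hgv⟩
      have hji : j = i :=
        stmt4aux_gv_inj uE vE be me e huv (j := j) (j' := i) (by omega) (by omega) hgv.symm
      omega
    · intro hiB; exact ⟨i, hiB, rfl⟩
  have htop : ¬ S (Sum.inl (vE e)) := by
    rintro ⟨j, hj, hgv⟩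
    rw [← stmt4aux_gv_top uE vE be me e] at hgv
    have hji : gz be e (me e) + 1 = j :=
      stmt4aux_gv_inj uE vE be me e huv (by omega) (by omega) hgv
    omega
  have hcl : ∀ w w', edgeStep (uTrans uE vE be me) (vTrans uE vE be me)
      (fun ek => X' ek && decide (ek.1 = e)) w w' → (S w ↔ S w') := by
    rintro w w' ⟨⟨e', ⟨k, hk⟩⟩, hXe, hor⟩
    simp only [Bool.and_eq_true, decide_eq_true_eq] at hXe
    obtain ⟨hX, heq⟩ := hXe
    subst heq
    have hxk : XeN me X' e' k = true := by
      unfold XeN; rw [dif_pos hk]; exact hX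
    have hkm : k < me e' := hk
    have key : S (uTrans uE vE be me ⟨e', ⟨k, hk⟩⟩) ↔
        S (vTrans uE vE be me ⟨e', ⟨k, hk⟩⟩) := by
      have huT : uTrans uE vE be me ⟨e', ⟨k, hk⟩⟩
          = gadgetVertex uE vE be me e' (gz be e' k) := rfl
      have hgzk : gz be e' k ≤ gz be e' (me e') := stmt4aux_gz_mono be e' (le_of_lt hkm)
      cases hbk : be e' (k+1) with
      | true =>
        have hvT : vTrans uE vE be me ⟨e', ⟨k, hk⟩⟩ = Sum.inl (vE e') := by
          unfold vTrans
          simp only [hbk, if_true]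
          exact stmt4aux_gv_top uE vE be me e'
        rw [huT, hvT]
        constructor
        · intro hS
          exfalso
          rw [hmem _ hgzk] at hS
          obtain ⟨j0, hj0k, hbj0, hxj0⟩ := hnall k hkm hbk hxk
          have hK0j0 : K0 ≤ j0 := hF6 j0 (by omega) hbj0 hxj0
          have hb5 : be e' (K0+1) = false := (hF5 (by omega)).1
          have h1 : gz be e' (K0 + 1) = gz be e' K0 + 1 := stmt4aux_gz_succ_false hb5
          have h2 : gz be e' (K0+1) ≤ gz be e' k := stmt4aux_gz_mono be e' (by omega)
          omega
        · intro hS; exact absurd hS htop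
      | false =>
        have hvT : vTrans uE vE be me ⟨e', ⟨k, hk⟩⟩
            = gadgetVertex uE vE be me e' (gz be e' (k+1)) := by
          unfold vTrans
          simp only [hbk]
          rfl
        have hsucc : gz be e' (k+1) = gz be e' k + 1 := stmt4aux_gz_succ_false hbk
        have hgzk1 : gz be e' (k+1) ≤ gz be e' (me e') := stmt4aux_gz_mono be e' hkm
        rw [huT, hvT, hmem _ hgzk, hmem _ hgzk1, hsucc]
        constructor
        · intro hle
          rcases Nat.lt_or_ge k K0 with hlt | hge
          · calc gz be e' k + 1 = gz be e' (k+1) := hsucc.symm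
              _ ≤ gz be e' K0 := stmt4aux_gz_mono be e' (by omega)
          · exfalso
            have hK0m : K0 < me e' := by omega
            obtain ⟨hb5, hx5⟩ := hF5 hK0m
            rcases Nat.eq_or_lt_of_le hge with heq | hlt2
            · rw [heq] at hx5; rw [hx5] at hxk; exact absurd hxk (by simp)
            · have h1 : gz be e' (K0 + 1) = gz be e' K0 + 1 := stmt4aux_gz_succ_false hb5
              have h2 : gz be e' (K0+1) ≤ gz be e' k := stmt4aux_gz_mono be e' (by omega)
              omega
        · intro hle; omega
    rcases hor with ⟨h1, h2⟩ | ⟨h1, h2⟩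
    · rw [← h1, ← h2]; exact key
    · rw [← h1, ← h2]; exact key.symm
  have hstart : S (Sum.inl (uE e)) := ⟨0, Nat.zero_le _, (stmt4aux_gv_zero uE vE be me e).symm⟩
  exact htop (stmt4aux_invar hcl hcon hstart)

end Gadget

/- ## Safety equivalence -/

section Safety
variable {V E : Type*} [DecidableEq V] [DecidableEq E] (uE vE : E → V) (be : E → ℕ → Bool) (me : E → ℕ)
  (X' : (Σ e : E, Fin (me e)) → Bool)

open scoped Classical in
/-- The collapsed edge state on `G`: edge `e` is up iff its gadget connects. -/
noncomputable def Ygad : E → Bool :=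
  fun e => decide (gadCond (me e) (be e) (XeN me X' e))

open scoped Classical in
lemma stmt4aux_Ygad_true_iff (e : E) :
    Ygad be me X' e = true ↔ gadCond (me e) (be e) (XeN me X' e) := by
  simp [Ygad]

lemma stmt4aux_edgeStep_symm {V' E' : Type*} (u v : E' → V') (X : E' → Bool) :
    Symmetric (edgeStep u v X) := by
  rintro a b ⟨e, hX, hor⟩
  exact ⟨e, hX, hor.symm⟩

lemma stmt4aux_xconn_symm {V' E' : Type*} (u v : E' → V') (X : E' → Bool) {a b : V'}
    (h : xConnected u v X a b) : xConnected u v X b a :=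
  (@Relation.ReflTransGen.stdSymm _ (edgeStep u v X) ⟨stmt4aux_edgeStep_symm u v X⟩).symm _ _ h

/-- restricted state: only the edges of gadget `e` are kept. -/
def restr : E → (Σ e : E, Fin (me e)) → Bool :=
  fun e ek => X' ek && decide (ek.1 = e)

lemma stmt4aux_gv_inl (e : E) (j : ℕ) (x : V)
    (h : gadgetVertex uE vE be me e j = Sum.inl x) : x = uE e ∨ x = vE e := by
  rcases stmt4aux_gv_cases uE vE be me e j with h1 | h1 | ⟨i, h1⟩ <;> rw [h1] at h
  · exact Or.inl (Sum.inl.inj h).symm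
  · exact Or.inr (Sum.inl.inj h).symm
  · exact absurd h (by simp)

lemma stmt4aux_gv_notinr (e : E) (j : ℕ) (e1 : E) (i : Fin (gz be e1 (me e1)))
    (hne : e1 ≠ e) : gadgetVertex uE vE be me e j ≠ Sum.inr ⟨e1, i⟩ := by
  rcases stmt4aux_gv_cases uE vE be me e j with h1 | h1 | ⟨i', h1⟩ <;> rw [h1]
  · simp
  · simp
  · intro h
    have := Sum.inr.inj h
    exact hne (Sigma.mk.inj_iff.mp this).1.symm

/-- An endpoint of a nontrivial within-gadget-`e` path starting at an original
vertex must be one of the two terminals of gadget `e`. -/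
lemma stmt4aux_endpoint (e : E) (x : V) (t : Vtrans V E be me)
    (h : xConnected (uTrans uE vE be me) (vTrans uE vE be me) (restr me X' e)
      (Sum.inl x) t)
    (hne : (Sum.inl x : Vtrans V E be me) ≠ t) : x = uE e ∨ x = vE e := by
  rcases Relation.ReflTransGen.cases_head h with heq | ⟨c, ⟨⟨e1, k⟩, hX, hor⟩, _⟩
  · exact absurd heq hne
  · simp only [restr, Bool.and_eq_true, decide_eq_true_eq] at hX
    obtain ⟨hX1, rfl⟩ := hX
    rcases hor with ⟨h1, _⟩ | ⟨_, h2⟩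
    · exact stmt4aux_gv_inl uE vE be me _ _ x h1
    · cases hbk : be e1 (k.val + 1) <;>
        · unfold vTrans at h2
          simp only [hbk, Bool.false_eq_true, if_true, if_false] at h2
          exact stmt4aux_gv_inl uE vE be me _ _ x h2

/-- Interior vertices of one gadget cannot start a path inside another gadget. -/
lemma stmt4aux_interior (e1 e2 : E) (hne : e1 ≠ e2) (i : Fin (gz be e1 (me e1)))
    (t : Vtrans V E be me)
    (h : xConnected (uTrans uE vE be me) (vTrans uE vE be me) (restr me X' e2)
      (Sum.inr ⟨e1, i⟩) t) (hinl : ∃ v : V, t = Sum.inl v) : False := by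
  obtain ⟨v, rfl⟩ := hinl
  rcases Relation.ReflTransGen.cases_head h with heq | ⟨c, ⟨⟨e', k⟩, hX, hor⟩, _⟩
  · exact absurd heq (by simp)
  · simp only [restr, Bool.and_eq_true, decide_eq_true_eq] at hX
    obtain ⟨hX1, rfl⟩ := hX
    rcases hor with ⟨h1, _⟩ | ⟨_, h2⟩
    · exact stmt4aux_gv_notinr uE vE be me e' (gz be e' k.val) _ i hne h1
    · cases hbk : be e' (k.val + 1) <;>
        · unfold vTrans at h2
          simp only [hbk, Bool.false_eq_true, if_true, if_false] at h2
          exact stmt4aux_gv_notinr uE vE be me _ _ _ i hne h2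

/-- Within-gadget connectivity of two original vertices collapses to an edge step. -/
lemma stmt4aux_C (e : E) (x y : V)
    (h : xConnected (uTrans uE vE be me) (vTrans uE vE be me) (restr me X' e)
      (Sum.inl x) (Sum.inl y)) :
    x = y ∨ edgeStep uE vE (Ygad be me X') x y := by
  by_cases hxy : x = y
  · exact Or.inl hxy
  right
  have hne : (Sum.inl x : Vtrans V E be me) ≠ Sum.inl y := by simpa using hxy
  have hx := stmt4aux_endpoint uE vE be me X' e x _ h hne
  have hy := stmt4aux_endpoint uE vE be me X' e y _
    (stmt4aux_xconn_symm _ _ _ h) (Ne.symm hne)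
  have hYe : ∀ (huv : uE e ≠ vE e),
      Ygad be me X' e = true := by
    intro huv
    rcases hx with hx | hx <;> rcases hy with hy | hy
    · exact absurd (hx.trans hy.symm) hxy
    · refine (stmt4aux_Ygad_true_iff be me X' e).mpr ?_
      refine stmt4aux_gadBlock uE vE be me X' e huv ?_
      rw [← hx, ← hy]
      exact h
    · refine (stmt4aux_Ygad_true_iff be me X' e).mpr ?_
      refine stmt4aux_gadBlock uE vE be me X' e huv ?_
      rw [← hy, ← hx]
      exact stmt4aux_xconn_symm _ _ _ h
    · exact absurd (hx.trans hy.symm) hxy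
  rcases hx with hx | hx <;> rcases hy with hy | hy
  · exact absurd (hx.trans hy.symm) hxy
  · have huv : uE e ≠ vE e := by rw [← hx, ← hy]; exact hxy
    exact ⟨e, hYe huv, Or.inl ⟨hx.symm, hy.symm⟩⟩
  · have huv : uE e ≠ vE e := by rw [← hy, ← hx]; exact Ne.symm hxy
    exact ⟨e, hYe huv, Or.inr ⟨hy.symm, hx.symm⟩⟩
  · exact absurd (hx.trans hy.symm) hxy

/-- Main projection: connectivity in `G'` collapses to connectivity in `G`. -/
lemma stmt4aux_proj (a : V) {w : Vtrans V E be me}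
    (h : xConnected (uTrans uE vE be me) (vTrans uE vE be me) X' (Sum.inl a) w) :
    ∀ v : V, (w = Sum.inl v ∨ ∃ e, xConnected (uTrans uE vE be me) (vTrans uE vE be me)
        (restr me X' e) w (Sum.inl v)) →
      xConnected uE vE (Ygad be me X') a v := by
  induction h with
  | refl =>
    intro v hv
    rcases hv with heq | ⟨e, hGC⟩
    · rw [Sum.inl.inj heq]
      exact Relation.ReflTransGen.refl
    · rcases stmt4aux_C uE vE be me X' e a v hGC with rfl | hstep
      · exact Relation.ReflTransGen.refl
      · exact Relation.ReflTransGen.single hstep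
  | @tail w w' hwprev hstep ih =>
    intro v hv
    obtain ⟨⟨e1, k⟩, hX, hor⟩ := hstep
    have hsingle : edgeStep (uTrans uE vE be me) (vTrans uE vE be me) (restr me X' e1) w w' :=
      ⟨⟨e1, k⟩, by simp [restr, hX], hor⟩
    rcases hv with heq | ⟨e2, hGC⟩
    · refine ih v (Or.inr ⟨e1, ?_⟩)
      rw [← heq]
      exact Relation.ReflTransGen.single hsingle
    · by_cases he : e2 = e1
      · subst he
        exact ih v (Or.inr ⟨e2, Relation.ReflTransGen.head hsingle hGC⟩)
      · -- w' must be an original vertex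
        have hcases : ∀ j : ℕ, (∃ x : V, gadgetVertex uE vE be me e1 j = Sum.inl x) ∨
            ∃ i, gadgetVertex uE vE be me e1 j
              = Sum.inr (⟨e1, i⟩ : Σ e, Fin (gz be e (me e))) := by
          intro j
          rcases stmt4aux_gv_cases uE vE be me e1 j with hh | hh | ⟨i, hh⟩
          · exact Or.inl ⟨_, hh⟩
          · exact Or.inl ⟨_, hh⟩
          · exact Or.inr ⟨i, hh⟩
        have hw' : (∃ x : V, w' = Sum.inl x) ∨
            ∃ i, w' = Sum.inr (⟨e1, i⟩ : Σ e, Fin (gz be e (me e))) := by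
          rcases hor with ⟨_, h2⟩ | ⟨h1, _⟩
          · rw [← h2]
            unfold vTrans
            cases hbk : be e1 (k.val + 1) <;>
              simp only [hbk, Bool.false_eq_true, if_true, if_false] <;>
              exact hcases _
          · rw [← h1]
            exact hcases _
        rcases hw' with ⟨x, rfl⟩ | ⟨i, rfl⟩
        · have hx : xConnected uE vE (Ygad be me X') a x :=
            ih x (Or.inr ⟨e1, Relation.ReflTransGen.single hsingle⟩)
          rcases stmt4aux_C uE vE be me X' e2 x v hGC with rfl | hstep2
          · exact hx
          · exact Relation.ReflTransGen.tail hx hstep2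
        · exact absurd hGC (fun hh =>
            stmt4aux_interior uE vE be me X' e1 e2 (Ne.symm he) i _ hh ⟨v, rfl⟩)

/-- The safety equivalence. -/
lemma stmt4aux_safe_iff (K : Finset V) :
    safe (uTrans uE vE be me) (vTrans uE vE be me) (K.image Sum.inl) X'
      ↔ safe uE vE K (Ygad be me X') := by
  classical
  constructor
  · intro hs a ha b hb
    have h := hs (Sum.inl a) (Finset.mem_image_of_mem _ ha)
      (Sum.inl b) (Finset.mem_image_of_mem _ hb)
    exact stmt4aux_proj uE vE be me X' a h b (Or.inl rfl)
  · intro hs a' ha' b' hb'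
    obtain ⟨a, ha, rfl⟩ := Finset.mem_image.mp ha'
    obtain ⟨b, hb, rfl⟩ := Finset.mem_image.mp hb'
    have h : xConnected uE vE (Ygad be me X') a b := hs a ha b hb
    clear ha hb ha' hb'
    induction h with
    | refl => exact Relation.ReflTransGen.refl
    | tail hprev hstep ih =>
      obtain ⟨e, hY, hor⟩ := hstep
      have hgad : gadCond (me e) (be e) (XeN me X' e) :=
        (stmt4aux_Ygad_true_iff be me X' e).mp hY
      have hpath := stmt4aux_gadPath uE vE be me X' e hgad
      rcases hor with ⟨h1, h2⟩ | ⟨h1, h2⟩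
      · rw [h1, h2] at hpath
        exact Relation.ReflTransGen.trans ih hpath
      · rw [h1, h2] at hpath
        exact Relation.ReflTransGen.trans ih (stmt4aux_xconn_symm _ _ _ hpath)

end Safety

/- ## Counting -/

/-- Extend a `Fin m`-indexed state to `ℕ`. -/
def extb (m : ℕ) (x : Fin m → Bool) : ℕ → Bool :=
  fun k => if h : k < m then x ⟨k, h⟩ else false

lemma stmt4aux_extb_zero (m : ℕ) (h : Bool) (t : Fin m → Bool) :
    extb (m+1) (Fin.cons h t) 0 = h := by
  unfold extb
  rw [dif_pos (Nat.succ_pos m)]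
  rfl

lemma stmt4aux_extb_succ (m : ℕ) (h : Bool) (t : Fin m → Bool) (k : ℕ) :
    extb (m+1) (Fin.cons h t) (k+1) = extb m t k := by
  unfold extb
  by_cases hk : k < m
  · rw [dif_pos (by omega : k + 1 < m + 1), dif_pos hk]
    exact @Fin.cons_succ m (fun _ => Bool) h t ⟨k, hk⟩
  · rw [dif_neg (by omega), dif_neg hk]

lemma stmt4aux_cond_succ (m : ℕ) (b : ℕ → Bool) (h : Bool) (t : Fin m → Bool) :
    gadCond (m+1) b (extb (m+1) (Fin.cons h t)) ↔
      (if b 1 = true then (h = true ∨ gadCond m (fun n => b (n+1)) (extb m t))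
       else (h = true ∧ gadCond m (fun n => b (n+1)) (extb m t))) := by
  constructor
  · rintro ⟨k, hk, hbk, hxk, hz⟩
    cases k with
    | zero =>
      rw [stmt4aux_extb_zero] at hxk
      rw [if_pos hbk]
      exact Or.inl hxk
    | succ k' =>
      have hC : gadCond m (fun n => b (n+1)) (extb m t) := by
        refine ⟨k', by omega, hbk, by rwa [stmt4aux_extb_succ] at hxk, ?_⟩
        intro j hj hbj
        have := hz (j+1) (by omega) hbj
        rwa [stmt4aux_extb_succ] at this
      split
      · exact Or.inr hC
      · next hb1 =>
        refine ⟨?_, hC⟩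
        have := hz 0 (by omega) (by simpa using hb1)
        rwa [stmt4aux_extb_zero] at this
  · intro hyp
    split at hyp
    · next hb1 =>
      rcases hyp with hh | ⟨k', hk', hbk', hxk', hz'⟩
      · exact ⟨0, by omega, hb1, by rwa [stmt4aux_extb_zero], by omega⟩
      · refine ⟨k'+1, by omega, hbk', by rwa [stmt4aux_extb_succ], ?_⟩
        intro j hj hbj
        cases j with
        | zero => rw [hb1] at hbj; exact absurd hbj (by simp)
        | succ j' =>
          rw [stmt4aux_extb_succ]
          exact hz' j' (by omega) hbj
    · next hb1 =>
      obtain ⟨hh, k', hk', hbk', hxk', hz'⟩ := hyp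
      refine ⟨k'+1, by omega, hbk', by rwa [stmt4aux_extb_succ], ?_⟩
      intro j hj hbj
      cases j with
      | zero => rwa [stmt4aux_extb_zero]
      | succ j' =>
        rw [stmt4aux_extb_succ]
        exact hz' j' (by omega) hbj

open scoped Classical in
lemma stmt4aux_count (m : ℕ) (b : ℕ → Bool) :
    ∑ x : Fin m → Bool, (if gadCond m b (extb m x) then (1:ℝ) else 0)
      = ∑ k ∈ Finset.range m, (if b (k+1) then (2:ℝ)^(m-1-k) else 0) := by
  induction m generalizing b with
  | zero => simp [gadCond]
  | succ m ih =>
    have hre : ∑ x : Fin (m+1) → Bool, (if gadCond (m+1) b (extb (m+1) x) then (1:ℝ) else 0)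
        = ∑ p : Bool × (Fin m → Bool),
            (if gadCond (m+1) b (extb (m+1) (Fin.cons p.1 p.2)) then (1:ℝ) else 0) := by
      refine (Fintype.sum_equiv (Fin.consEquiv (fun _ => Bool)) _ _ ?_).symm
      intro p
      rfl
    rw [hre, Fintype.sum_prod_type]
    have hterm : ∀ (h : Bool) (t : Fin m → Bool),
        (if gadCond (m+1) b (extb (m+1) (Fin.cons h t)) then (1:ℝ) else 0)
          = (if (if b 1 = true then (h = true ∨ gadCond m (fun n => b (n+1)) (extb m t))
              else (h = true ∧ gadCond m (fun n => b (n+1)) (extb m t))) then (1:ℝ) else 0) := by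
      intro h t
      exact if_congr (stmt4aux_cond_succ m b h t) rfl rfl
    simp only [hterm]
    rw [Fintype.sum_bool]
    have hcard : ∑ _t : Fin m → Bool, (1:ℝ) = 2^m := by
      rw [Finset.sum_const]
      simp [Fintype.card_fun]
    have hRHS : ∑ k ∈ Finset.range (m+1), (if b (k+1) then (2:ℝ)^(m+1-1-k) else 0)
        = (∑ k ∈ Finset.range m, (if b (k+1+1) then (2:ℝ)^(m-1-k) else 0))
          + (if b 1 then (2:ℝ)^m else 0) := by
      rw [Finset.sum_range_succ' (fun k => if b (k+1) then (2:ℝ)^(m+1-1-k) else 0) m]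
      congr 1
      refine Finset.sum_congr rfl ?_
      intro k hk
      have hk' : k < m := Finset.mem_range.mp hk
      congr 2
      omega
    rcases Bool.eq_false_or_eq_true (b 1) with hb1 | hb1
    · have htrue : ∑ t : Fin m → Bool,
          (if (if b 1 = true then ((true:Bool) = true ∨ gadCond m (fun n => b (n+1)) (extb m t))
              else ((true:Bool) = true ∧ gadCond m (fun n => b (n+1)) (extb m t)))
            then (1:ℝ) else 0)
            = 2^m := by
        rw [← hcard]
        refine Finset.sum_congr rfl ?_
        intro t _
        have hcond : (if b 1 = true
            then ((true:Bool) = true ∨ gadCond m (fun n => b (n+1)) (extb m t))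
            else ((true:Bool) = true ∧ gadCond m (fun n => b (n+1)) (extb m t))) := by
          rw [if_pos hb1]
          exact Or.inl rfl
        rw [if_pos hcond]
      have hfalse : ∑ t : Fin m → Bool,
          (if (if b 1 = true then ((false:Bool) = true ∨ gadCond m (fun n => b (n+1)) (extb m t))
              else ((false:Bool) = true ∧ gadCond m (fun n => b (n+1)) (extb m t)))
            then (1:ℝ) else 0)
            = ∑ k ∈ Finset.range m, (if b (k+1+1) then (2:ℝ)^(m-1-k) else 0) := by
        rw [← ih (fun n => b (n+1))]
        refine Finset.sum_congr rfl ?_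
        intro t _
        refine if_congr ?_ rfl rfl
        rw [if_pos hb1]
        simp
      rw [htrue, hfalse, hRHS, if_pos hb1]
      ring
    · have htrue : ∑ t : Fin m → Bool,
          (if (if b 1 = true then ((true:Bool) = true ∨ gadCond m (fun n => b (n+1)) (extb m t))
              else ((true:Bool) = true ∧ gadCond m (fun n => b (n+1)) (extb m t)))
            then (1:ℝ) else 0)
            = ∑ k ∈ Finset.range m, (if b (k+1+1) then (2:ℝ)^(m-1-k) else 0) := by
        rw [← ih (fun n => b (n+1))]
        refine Finset.sum_congr rfl ?_
        intro t _
        refine if_congr ?_ rfl rfl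
        rw [if_neg (by simp [hb1])]
        simp
      have hfalse : ∑ t : Fin m → Bool,
          (if (if b 1 = true then ((false:Bool) = true ∨ gadCond m (fun n => b (n+1)) (extb m t))
              else ((false:Bool) = true ∧ gadCond m (fun n => b (n+1)) (extb m t)))
            then (1:ℝ) else 0)
            = 0 := by
        refine Finset.sum_eq_zero ?_
        intro t _
        have hcond : ¬ (if b 1 = true
            then ((false:Bool) = true ∨ gadCond m (fun n => b (n+1)) (extb m t))
            else ((false:Bool) = true ∧ gadCond m (fun n => b (n+1)) (extb m t))) := by
          rw [if_neg (by simp [hb1])]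
          simp
        rw [if_neg hcond]
      rw [htrue, hfalse, hRHS, if_neg (by simp [hb1] : ¬ b 1 = true)]

lemma stmt4aux_Icc_range (m : ℕ) (f : ℕ → ℝ) :
    ∑ k ∈ Finset.Icc 1 m, f k = ∑ k ∈ Finset.range m, f (k+1) := by
  rw [← Finset.Ico_add_one_right_eq_Icc, Finset.sum_Ico_eq_sum_range]
  simp [Nat.add_comm]

open scoped Classical in
lemma stmt4aux_weight (m : ℕ) (b : ℕ → Bool) (pe : ℝ)
    (hsum : 1 - pe = ∑ k ∈ Finset.Icc 1 m, (if b k then ((1:ℝ)/2)^k else 0)) (y : Bool) :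
    ∑ x : Fin m → Bool,
        (if (decide (gadCond m b (extb m x)) = y) then ((1:ℝ)/2)^m else 0)
      = if y then (1 - pe) else pe := by
  have htrue : ∑ x : Fin m → Bool,
      (if gadCond m b (extb m x) then ((1:ℝ)/2)^m else 0) = 1 - pe := by
    have h1 : ∀ x : Fin m → Bool,
        (if gadCond m b (extb m x) then ((1:ℝ)/2)^m else 0)
          = ((1:ℝ)/2)^m * (if gadCond m b (extb m x) then (1:ℝ) else 0) := by
      intro x; split <;> ring
    rw [Finset.sum_congr rfl (fun x _ => h1 x), ← Finset.mul_sum, stmt4aux_count m b,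
      Finset.mul_sum]
    rw [hsum, stmt4aux_Icc_range]
    refine Finset.sum_congr rfl ?_
    intro k hk
    have hk' : k < m := Finset.mem_range.mp hk
    rw [mul_ite, mul_zero]
    refine if_congr Iff.rfl ?_ rfl
    have h2 : (0:ℝ) < 2 ^ m := by positivity
    rw [div_pow, one_pow, div_pow, one_pow, div_mul_eq_mul_div, one_mul,
      div_eq_div_iff (ne_of_gt h2) (by positivity)]
    rw [one_mul, ← pow_add]
    congr 1
    omega
  cases y with
  | true =>
    rw [if_pos rfl]
    rw [← htrue]
    refine Finset.sum_congr rfl ?_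
    intro x _
    refine if_congr ?_ rfl rfl
    simp
  | false =>
    rw [if_neg (by simp)]
    have h2 : ∀ x : Fin m → Bool,
        (if (decide (gadCond m b (extb m x)) = false) then ((1:ℝ)/2)^m else 0)
          = ((1:ℝ)/2)^m - (if gadCond m b (extb m x) then ((1:ℝ)/2)^m else 0) := by
      intro x
      by_cases h : gadCond m b (extb m x)
      · rw [if_pos h, if_neg (by simp [h]), sub_self]
      · rw [if_neg h, if_pos (by simp [h]), sub_zero]
    rw [Finset.sum_congr rfl (fun x _ => h2 x), Finset.sum_sub_distrib, htrue,
      Finset.sum_const, Finset.card_univ]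
    have hcard : Fintype.card (Fin m → Bool) = 2^m := by simp [Fintype.card_fun]
    rw [hcard]
    have : (2^m : ℕ) • ((1:ℝ)/2)^m = 1 := by
      rw [nsmul_eq_mul]
      push_cast
      rw [div_pow, one_pow]
      field_simp
    rw [this]
    ring

/-- replacing every edge of `G` by its reliability-preserving gadget
leaves the `K`-terminal unreliability unchanged with all edge failure probabilities
set to `1/2`: `u_G(P) = u_{G′}(P_{1/2}) = |Ω_f(G′)| / 2^M` with `M = |E′| = Σ_e m_e`. -/
theorem stmt4 {V E : Type*} [Fintype V] [Fintype E] [DecidableEq V] [DecidableEq E]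
    (uE vE : E → V) (K : Finset V) (hK : 2 ≤ K.card)
    (p : E → ℝ) (hp : ∀ e, p e ∈ Set.Ioo (0 : ℝ) 1)
    (me : E → ℕ) (be : E → ℕ → Bool)
    (hbits : ∀ e, 1 - p e
      = ∑ k ∈ Finset.Icc 1 (me e), (if be e k then ((1 : ℝ)/2) ^ k else 0)) :
    unrel uE vE K p
        = unrel (uTrans uE vE be me) (vTrans uE vE be me) (K.image Sum.inl)
            (fun _ => 1/2) ∧
    unrel (uTrans uE vE be me) (vTrans uE vE be me) (K.image Sum.inl) (fun _ => 1/2)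
        = (Nat.card {X : (Σ e : E, Fin (me e)) → Bool //
              ¬ safe (uTrans uE vE be me) (vTrans uE vE be me) (K.image Sum.inl) X} : ℝ)
            / 2 ^ (∑ e : E, me e) := by
  classical
  have hM : Fintype.card (Σ e : E, Fin (me e)) = ∑ e : E, me e := by
    simp [Fintype.card_sigma]
  -- `unrel` of `G'` at probability 1/2 simplifies to an indicator sum
  have hhalf : unrel (uTrans uE vE be me) (vTrans uE vE be me) (K.image Sum.inl)
      (fun _ => 1/2)
      = ∑ X' : (Σ e : E, Fin (me e)) → Bool,
          (if safe (uTrans uE vE be me) (vTrans uE vE be me) (K.image Sum.inl) X'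
            then (0:ℝ) else 1) * ((1:ℝ)/2) ^ (∑ e : E, me e) := by
    unfold unrel
    refine Finset.sum_congr rfl ?_
    intro X' _
    congr 1
    have hfac : ∀ ek : Σ e : E, Fin (me e),
        ((1:ℝ)/2) ^ (if X' ek then 0 else 1) * (1 - 1/2) ^ (if X' ek then 1 else 0)
          = 1/2 := by
      intro ek
      cases h : X' ek <;> simp only [h, Bool.false_eq_true, if_true, if_false] <;> norm_num
    rw [Finset.prod_congr rfl (fun ek _ => hfac ek), Finset.prod_const, Finset.card_univ, hM]
  -- part 2
  have hcount : ∑ X' : (Σ e : E, Fin (me e)) → Bool,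
      (if safe (uTrans uE vE be me) (vTrans uE vE be me) (K.image Sum.inl) X'
        then (0:ℝ) else 1) * ((1:ℝ)/2) ^ (∑ e : E, me e)
      = (Nat.card {X : (Σ e : E, Fin (me e)) → Bool //
            ¬ safe (uTrans uE vE be me) (vTrans uE vE be me) (K.image Sum.inl) X} : ℝ)
          / 2 ^ (∑ e : E, me e) := by
    have h1 : ∀ X' : (Σ e : E, Fin (me e)) → Bool,
        (if safe (uTrans uE vE be me) (vTrans uE vE be me) (K.image Sum.inl) X'
          then (0:ℝ) else 1) * ((1:ℝ)/2) ^ (∑ e : E, me e)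
        = if ¬ safe (uTrans uE vE be me) (vTrans uE vE be me) (K.image Sum.inl) X'
            then ((1:ℝ)/2) ^ (∑ e : E, me e) else 0 := by
      intro X'
      by_cases h : safe (uTrans uE vE be me) (vTrans uE vE be me) (K.image Sum.inl) X'
      · rw [if_pos h, if_neg (by simpa using h), zero_mul]
      · rw [if_neg h, if_pos h, one_mul]
    rw [Finset.sum_congr rfl (fun X' _ => h1 X'), ← Finset.sum_filter, Finset.sum_const,
      nsmul_eq_mul]
    have hc : (Finset.univ.filter fun X' : (Σ e : E, Fin (me e)) → Bool =>
        ¬ safe (uTrans uE vE be me) (vTrans uE vE be me) (K.image Sum.inl) X').card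
        = Nat.card {X : (Σ e : E, Fin (me e)) → Bool //
            ¬ safe (uTrans uE vE be me) (vTrans uE vE be me) (K.image Sum.inl) X} := by
      rw [Nat.card_eq_fintype_card, Fintype.card_subtype]
    rw [hc, div_pow, one_pow]
    ring
  -- part 1: unrel of G at p equals the indicator sum over G' states
  have hGp : unrel uE vE K p
      = ∑ X' : (Σ e : E, Fin (me e)) → Bool,
          (if safe uE vE K (Ygad be me X') then (0:ℝ) else 1)
            * ((1:ℝ)/2) ^ (∑ e : E, me e) := by
    unfold unrel
    have hstepa : ∀ Y : E → Bool,
        (∏ e : E, p e ^ (if Y e then 0 else 1) * (1 - p e) ^ (if Y e then 1 else 0))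
          = ∏ e : E, ∑ x : Fin (me e) → Bool,
              (if (decide (gadCond (me e) (be e) (extb (me e) x)) = Y e)
                then ((1:ℝ)/2)^(me e) else 0) := by
      intro Y
      refine Finset.prod_congr rfl ?_
      intro e _
      rw [stmt4aux_weight (me e) (be e) (p e) (hbits e) (Y e)]
      by_cases h : Y e = true
      · simp [h]
      · simp [h]
    calc ∑ Y : E → Bool, (if safe uE vE K Y then (0:ℝ) else 1) *
            ∏ e : E, p e ^ (if Y e then 0 else 1) * (1 - p e) ^ (if Y e then 1 else 0)
        = ∑ Y : E → Bool, ∑ F : (∀ e : E, Fin (me e) → Bool),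
            (if safe uE vE K Y then (0:ℝ) else 1) *
              ∏ e : E, (if (decide (gadCond (me e) (be e) (extb (me e) (F e))) = Y e)
                then ((1:ℝ)/2)^(me e) else 0) := by
          refine Finset.sum_congr rfl ?_
          intro Y _
          rw [hstepa Y, Finset.prod_univ_sum, Fintype.piFinset_univ, Finset.mul_sum]
      _ = ∑ F : (∀ e : E, Fin (me e) → Bool), ∑ Y : E → Bool,
            (if safe uE vE K Y then (0:ℝ) else 1) *
              ∏ e : E, (if (decide (gadCond (me e) (be e) (extb (me e) (F e))) = Y e)
                then ((1:ℝ)/2)^(me e) else 0) := Finset.sum_comm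
      _ = ∑ F : (∀ e : E, Fin (me e) → Bool),
            (if safe uE vE K (fun e => decide (gadCond (me e) (be e) (extb (me e) (F e))))
              then (0:ℝ) else 1) * ∏ e : E, ((1:ℝ)/2)^(me e) := by
          refine Finset.sum_congr rfl ?_
          intro F _
          rw [Finset.sum_eq_single
            (fun e => decide (gadCond (me e) (be e) (extb (me e) (F e))))]
          · congr 1
            refine Finset.prod_congr rfl ?_
            intro e _
            rw [if_pos rfl]
          · intro Y _ hne
            obtain ⟨e0, he0⟩ := Function.ne_iff.mp hne
            have hz : (∏ e : E,
                (if (decide (gadCond (me e) (be e) (extb (me e) (F e))) = Y e)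
                  then ((1:ℝ)/2)^(me e) else 0)) = 0 :=
              Finset.prod_eq_zero (Finset.mem_univ e0) (if_neg (fun h => he0 h.symm))
            rw [hz, mul_zero]
          · intro h
            exact absurd (Finset.mem_univ _) h
      _ = ∑ F : (∀ e : E, Fin (me e) → Bool),
            (if safe uE vE K (fun e => decide (gadCond (me e) (be e) (extb (me e) (F e))))
              then (0:ℝ) else 1) * ((1:ℝ)/2) ^ (∑ e : E, me e) := by
          refine Finset.sum_congr rfl ?_
          intro F _
          rw [Finset.prod_pow_eq_pow_sum]
      _ = ∑ X' : (Σ e : E, Fin (me e)) → Bool,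
            (if safe uE vE K (Ygad be me X') then (0:ℝ) else 1)
              * ((1:ℝ)/2) ^ (∑ e : E, me e) := by
          refine Fintype.sum_equiv
            ((Equiv.piCurry (fun (e : E) (_ : Fin (me e)) => Bool)).symm) _ _ ?_
          intro F
          rfl
  refine ⟨?_, ?_⟩
  · rw [hGp, hhalf]
    refine Finset.sum_congr rfl ?_
    intro X' _
    congr 1
    exact if_congr (stmt4aux_safe_iff uE vE be me X' K).symm rfl rfl
  · rw [hhalf, hcount]
end

section
/- For every real s with 1/2 < s < 1 and every positive integer r, the lower binomial tail satisfies Σ_{i=0}^{⌊r/2⌋} C(r, i) s^i (1 − s)^{r−i} ≤ (4 s (1 − s))^{r/2}, where the right-hand side uses the real power with exponent r/2. -/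
/-- for `1/2 < s < 1` and a positive integer `r`, the lower binomial
tail satisfies `Σ_{i=0}^{⌊r/2⌋} C(r,i) s^i (1−s)^{r−i} ≤ (4 s (1−s))^{r/2}`, where
the right-hand side is a real power. -/
theorem stmt9 (s : ℝ) (hs0 : 1/2 < s) (hs1 : s < 1) (r : ℕ) (hr : 0 < r) :
    ∑ i ∈ Finset.range (r / 2 + 1), (r.choose i : ℝ) * s ^ i * (1 - s) ^ (r - i)
      ≤ (4 * s * (1 - s)) ^ ((r : ℝ) / 2) := by
  have ha : (0:ℝ) < s := by linarith
  have hb : (0:ℝ) < 1 - s := by linarith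
  set p : ℝ := s * (1 - s) with hpdef
  have hp : 0 < p := mul_pos ha hb
  have hb2 : (1 - s) ^ 2 ≤ p := by nlinarith
  -- termwise bound
  have hterm : ∀ i ∈ Finset.range (r / 2 + 1),
      (r.choose i : ℝ) * s ^ i * (1 - s) ^ (r - i)
        ≤ (r.choose i : ℝ) * p ^ ((r : ℝ) / 2) := by
    intro i hi
    have h2i : 2 * i ≤ r := by
      have : i ≤ r / 2 := Nat.lt_succ_iff.mp (Finset.mem_range.mp hi)
      omega
    have hsplit : s ^ i * (1 - s) ^ (r - i) = p ^ i * (1 - s) ^ (r - 2 * i) := by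
      have : r - i = i + (r - 2 * i) := by omega
      rw [this, pow_add, hpdef, mul_pow]
      ring
    have hkey : (1 - s) ^ (r - 2 * i) ≤ p ^ (((r : ℝ) - 2 * i) / 2) := by
      have hcast : ((r - 2 * i : ℕ) : ℝ) = (r : ℝ) - 2 * i := by
        push_cast [Nat.cast_sub h2i]; ring
      have hnn : (0:ℝ) ≤ (r : ℝ) - 2 * i := by rw [← hcast]; positivity
      have h1 : (1 - s) ^ (r - 2 * i) = ((1 - s) ^ 2) ^ (((r : ℝ) - 2 * i) / 2) := by
        have h2 : ((1 - s) ^ 2 : ℝ) = (1 - s) ^ (2:ℝ) := by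
          rw [← Real.rpow_natCast (1-s) 2]; norm_num
        rw [h2, ← Real.rpow_mul hb.le, ← Real.rpow_natCast (1-s) (r - 2 * i), hcast]
        congr 1; ring
      rw [h1]
      exact Real.rpow_le_rpow (sq_nonneg _) hb2 (div_nonneg hnn (by norm_num))
    have hcomb : p ^ i * p ^ (((r : ℝ) - 2 * i) / 2) = p ^ ((r : ℝ) / 2) := by
      rw [← Real.rpow_natCast p i, ← Real.rpow_add hp]
      ring_nf
    have : s ^ i * (1 - s) ^ (r - i) ≤ p ^ ((r : ℝ) / 2) := by
      rw [hsplit, ← hcomb]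
      exact mul_le_mul_of_nonneg_left hkey (by positivity)
    calc (r.choose i : ℝ) * s ^ i * (1 - s) ^ (r - i)
        = (r.choose i : ℝ) * (s ^ i * (1 - s) ^ (r - i)) := by ring
      _ ≤ (r.choose i : ℝ) * p ^ ((r : ℝ) / 2) :=
          mul_le_mul_of_nonneg_left this (by positivity)
  calc ∑ i ∈ Finset.range (r / 2 + 1), (r.choose i : ℝ) * s ^ i * (1 - s) ^ (r - i)
      ≤ ∑ i ∈ Finset.range (r / 2 + 1), (r.choose i : ℝ) * p ^ ((r : ℝ) / 2) :=
        Finset.sum_le_sum hterm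
    _ = (∑ i ∈ Finset.range (r / 2 + 1), (r.choose i : ℝ)) * p ^ ((r : ℝ) / 2) := by
        rw [Finset.sum_mul]
    _ ≤ (2 : ℝ) ^ r * p ^ ((r : ℝ) / 2) := by
        apply mul_le_mul_of_nonneg_right _ (by positivity)
        have h1 : ∑ i ∈ Finset.range (r / 2 + 1), (r.choose i) ≤ ∑ i ∈ Finset.range (r + 1), (r.choose i) :=
          Finset.sum_le_sum_of_subset (by
            apply Finset.range_subset_range.mpr; omega)
        have h2 : ∑ i ∈ Finset.range (r + 1), r.choose i = 2 ^ r := Nat.sum_range_choose r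
        calc (∑ i ∈ Finset.range (r / 2 + 1), (r.choose i : ℝ))
            = ((∑ i ∈ Finset.range (r / 2 + 1), r.choose i : ℕ) : ℝ) := by push_cast; rfl
          _ ≤ ((2 ^ r : ℕ) : ℝ) := by exact_mod_cast h1.trans_eq h2
          _ = (2 : ℝ) ^ r := by push_cast; rfl
    _ = (4 * s * (1 - s)) ^ ((r : ℝ) / 2) := by
        have h4 : (2 : ℝ) ^ r = (4 : ℝ) ^ ((r : ℝ) / 2) := by
          rw [show (4:ℝ) = (2:ℝ)^(2:ℝ) by norm_num, ← Real.rpow_natCast 2 r,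
            ← Real.rpow_mul (by norm_num)]
          ring_nf
        rw [h4, ← Real.mul_rpow (by norm_num) hp.le, hpdef, mul_assoc]
end
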